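/- Let π ∈ S_n and A = {a_1 < a_2 < ... < a_k} be an efficient dominating set of the permutation graph G_π. Then every private neighbor of a_1 is less than a_2, every private neighbor of a_k is greater than a_{k-1}, and for 2 ≤ i ≤ k−1, every private neighbor of a_i lies strictly between a_{i-1} and a_{i+1}. -/

import Mathlib

/-- The permutation graph of `π`: vertices `0,…,n-1` (0-indexed version of `1,…,n`),
with `i < j` adjacent iff `π⁻¹ i > π⁻¹ j`. -/
def permGraph {n : ℕ} (π : Equiv.Perm (Fin n)) : SimpleGraph (Fin n) where
  Adj i j := (i < j ∧ π.symm j < π.symm i) ∨ (j < i ∧ π.symm i < π.symm j)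
  symm := ⟨by intro i j h; tauto⟩
  loopless := ⟨by intro i h; rcases h with ⟨h, _⟩ | ⟨h, _⟩ <;> exact lt_irrefl i h⟩

/-- `D` dominates `G`: every vertex is in `D` or adjacent to an element of `D`. -/
def Dominates {V : Type*} (G : SimpleGraph V) (D : Set V) : Prop :=
  ∀ v, v ∈ D ∨ ∃ d ∈ D, G.Adj v d

/-- The domination number: minimum cardinality of a dominating set. -/
noncomputable def domNumber {V : Type*} [Fintype V] (G : SimpleGraph V) : ℕ :=
  sInf {k | ∃ D : Finset V, D.card = k ∧ Dominates G ↑D}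

/-- Closed neighborhood `N[x]`. -/
def closedNbhd {V : Type*} (G : SimpleGraph V) (x : V) : Set V :=
  {y | y = x ∨ G.Adj x y}

/-- Degree of a vertex. -/
noncomputable def deg {V : Type*} (G : SimpleGraph V) (v : V) : ℕ :=
  (G.neighborSet v).ncard

lemma permGraph_sandwich {n : ℕ} (π : Equiv.Perm (Fin n)) {u v w : Fin n}
    (huv : u < v) (hvw : v < w) (h : (permGraph π).Adj u w) :
    (permGraph π).Adj u v ∨ (permGraph π).Adj v w := by
  rcases h with ⟨_, h⟩ | ⟨h', _⟩
  · rcases lt_or_ge (π.symm v) (π.symm u) with hc | hc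
    · exact Or.inl (Or.inl ⟨huv, hc⟩)
    · exact Or.inr (Or.inl ⟨hvw, lt_of_lt_of_le h hc⟩)
  · exact absurd (huv.trans hvw) (not_lt.2 h'.le)

lemma key_private {n k : ℕ} (π : Equiv.Perm (Fin n)) (a : Fin k → Fin n) (ha : StrictMono a)
    (heff : ∀ i j : Fin k, i ≠ j →
      Disjoint (closedNbhd (permGraph π) (a i)) (closedNbhd (permGraph π) (a j)))
    (i j : Fin k) (hij : i ≠ j) (x : Fin n)
    (hx : closedNbhd (permGraph π) x ∩ Set.range a = {a i}) :
    (i < j → x < a j) ∧ (j < i → a j < x) := by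
  have hai : a i ∈ closedNbhd (permGraph π) x ∩ Set.range a := by
    rw [hx]; exact rfl
  have hmem : ∀ y : Fin n, (y = x ∨ (permGraph π).Adj x y) → y ∈ Set.range a → y = a i := by
    intro y h1 h2
    have : y ∈ closedNbhd (permGraph π) x ∩ Set.range a := ⟨h1, h2⟩
    rw [hx] at this; exact this
  rcases hai.1 with heq | hadj
  · constructor
    · intro hlt; exact heq ▸ ha hlt
    · intro hlt; exact heq ▸ ha hlt
  · have haji : a j ≠ a i := fun h => hij (ha.injective h.symm)
    constructor
    · intro hlt
      by_contra hle
      push_neg at hle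
      rcases eq_or_lt_of_le hle with heq2 | hlt2
      · exact haji (hmem (a j) (Or.inl heq2) ⟨j, rfl⟩)
      · rcases permGraph_sandwich π (ha hlt) hlt2 hadj.symm with h1 | h1
        · exact Set.disjoint_left.mp (heff i j hij) (show a j ∈ closedNbhd (permGraph π) (a i) from Or.inr h1) (Or.inl rfl)
        · exact haji (hmem (a j) (Or.inr h1.symm) ⟨j, rfl⟩)
    · intro hlt
      by_contra hle
      push_neg at hle
      rcases eq_or_lt_of_le hle with heq2 | hlt2
      · exact haji (hmem (a j) (Or.inl heq2.symm) ⟨j, rfl⟩)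
      · rcases permGraph_sandwich π hlt2 (ha hlt) hadj with h1 | h1
        · exact haji (hmem (a j) (Or.inr h1) ⟨j, rfl⟩)
        · exact Set.disjoint_left.mp (heff i j hij) (show a j ∈ closedNbhd (permGraph π) (a i) from Or.inr h1.symm) (Or.inl rfl)

theorem efficient_dominating_private_neighbors {n k : ℕ} (π : Equiv.Perm (Fin n))
    (a : Fin k → Fin n) (ha : StrictMono a) (hk : 2 ≤ k)
    (hdom : Dominates (permGraph π) (Set.range a))
    (heff : ∀ i j : Fin k, i ≠ j →
      Disjoint (closedNbhd (permGraph π) (a i)) (closedNbhd (permGraph π) (a j))) :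
    (∀ x, closedNbhd (permGraph π) x ∩ Set.range a = {a ⟨0, by omega⟩} →
        x < a ⟨1, by omega⟩) ∧
    (∀ x, closedNbhd (permGraph π) x ∩ Set.range a = {a ⟨k - 1, by omega⟩} →
        a ⟨k - 2, by omega⟩ < x) ∧
    (∀ i : ℕ, ∀ _h1 : 1 ≤ i, ∀ _h2 : i ≤ k - 2, ∀ x,
        closedNbhd (permGraph π) x ∩ Set.range a = {a ⟨i, by omega⟩} →
        a ⟨i - 1, by omega⟩ < x ∧ x < a ⟨i + 1, by omega⟩) := by
  refine ⟨?_, ?_, ?_⟩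
  · intro x hx
    exact (key_private π a ha heff ⟨0, by omega⟩ ⟨1, by omega⟩ (by simp) x hx).1 (by simp)
  · intro x hx
    exact (key_private π a ha heff ⟨k - 1, by omega⟩ ⟨k - 2, by omega⟩
      (by simp [Fin.ext_iff]; omega) x hx).2 (by simp [Fin.lt_def]; omega)
  · intro i h1 h2 x hx
    constructor
    · exact (key_private π a ha heff ⟨i, by omega⟩ ⟨i - 1, by omega⟩
        (by simp [Fin.ext_iff]; omega) x hx).2 (by simp [Fin.lt_def]; omega)
    · exact (key_private π a ha heff ⟨i, by omega⟩ ⟨i + 1, by omega⟩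
        (by simp [Fin.ext_iff]) x hx).1 (by simp [Fin.lt_def])
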